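/- arXiv:2511.20230 — 13 statements merged into one kernel-verified Lean document; each statement's English description precedes it below -/
import Mathlib

section
/- Let (𝔤, [·,·], ω) be a quasi-Frobenius Lie algebra with Levi-Civita product •. Then the orthogonal complement [𝔤,𝔤]^⊥ of the derived algebra with respect to ω equals { u ∈ 𝔤 : u•v = 0 for all v ∈ 𝔤 }, and also equals { u ∈ 𝔤 : ω([u,v],w) = −ω(v,[u,w]) for all v,w }. In particular [𝔤,𝔤]^⊥ is an abelian subalgebra of 𝔤. -/
/-- For a quasi-Frobenius Lie algebra with Levi-Civita product `p`,
`[𝔤,𝔤]^⊥ = { u : ∀ v, u•v = 0 } = { u : ad_u is ω-anti-symmetric }`, and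
`[𝔤,𝔤]^⊥` is an abelian subalgebra. -/
theorem stmt3 {K L : Type*} [Field K] [CharZero K] [LieRing L] [LieAlgebra K L]
    (ω : L →ₗ[K] L →ₗ[K] K)
    (hskew : ∀ u v, ω u v = - ω v u)
    (hnd : ∀ u, (∀ v, ω u v = 0) → u = 0)
    (hclosed : ∀ u v w, ω ⁅u, v⁆ w + ω ⁅v, w⁆ u + ω ⁅w, u⁆ v = 0)
    (p : L →ₗ[K] L →ₗ[K] L)
    (hp1 : ∀ u v, p u v - p v u = ⁅u, v⁆)
    (hp2 : ∀ u v w, ω (p u v) w = ω v (p u w)) :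
    ({u : L | ∀ v w : L, ω u ⁅v, w⁆ = 0} = {u : L | ∀ v : L, p u v = 0}) ∧
    ({u : L | ∀ v w : L, ω u ⁅v, w⁆ = 0} =
      {u : L | ∀ v w : L, ω ⁅u, v⁆ w = - ω v ⁅u, w⁆}) ∧
    (∀ u v : L, (∀ a c : L, ω u ⁅a, c⁆ = 0) → (∀ a c : L, ω v ⁅a, c⁆ = 0) → ⁅u, v⁆ = 0) := by
  have two_ne : (2 : K) ≠ 0 := two_ne_zero
  -- antisymmetry of (v,w) ↦ ω (p u v) w
  have hanti : ∀ u v w : L, ω (p u v) w = - ω (p u w) v := by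
    intro u v w
    rw [hp2, hskew]
  -- the bracket relation applied under ω
  have hsub : ∀ u v w : L, ω (p u v) w - ω (p v u) w = ω ⁅u, v⁆ w := by
    intro u v w
    have := congrArg (fun x => ω x w) (hp1 u v)
    simpa [map_sub] using this
  -- key formula: 2 ω (p u v) w = ω [u,v] w - ω [v,w] u + ω [w,u] v
  have key : ∀ u v w : L,
      2 * ω (p u v) w = ω ⁅u, v⁆ w - ω ⁅v, w⁆ u + ω ⁅w, u⁆ v := by
    intro u v w
    have h1 := hsub u v w
    have h2 := hanti v u w
    have h3 := hsub v w u
    have h4 := hanti w v u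
    have h5 := hsub w u v
    have h6 := hanti u w v
    linear_combination h1 + h2 - h3 - h4 + h5 + h6
  -- orthogonal ⊆ p-annihilator
  have dirA : ∀ u : L, (∀ v w : L, ω u ⁅v, w⁆ = 0) → ∀ v : L, p u v = 0 := by
    intro u h v
    apply hnd
    intro w
    have hk := key u v w
    have hz : ω ⁅v, w⁆ u = 0 := by
      rw [hskew ⁅v, w⁆ u, h v w, neg_zero]
    have hc := hclosed u v w
    have h2 : 2 * ω (p u v) w = 0 := by linear_combination hk + hc - 2 * hz
    exact (mul_eq_zero.mp h2).resolve_left two_ne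
  -- p-annihilator ⊆ orthogonal
  have dirB : ∀ u : L, (∀ v : L, p u v = 0) → ∀ v w : L, ω u ⁅v, w⁆ = 0 := by
    intro u h v w
    have hv : p v u = -⁅u, v⁆ := by
      have := hp1 u v
      rw [h v, zero_sub] at this
      exact neg_eq_iff_eq_neg.mp this
    have hw : p w u = -⁅u, w⁆ := by
      have := hp1 u w
      rw [h w, zero_sub] at this
      exact neg_eq_iff_eq_neg.mp this
    have e1 : ω u ⁅v, w⁆ = ω u (p v w) - ω u (p w v) := by
      rw [← hp1 v w]; simp [map_sub]
    have echain : ω u ⁅v, w⁆ = - ω ⁅u, v⁆ w + ω ⁅u, w⁆ v := by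
      rw [e1, ← hp2 v u w, ← hp2 w u v, hv, hw]
      simp only [map_neg, LinearMap.neg_apply]
      ring
    have hc := hclosed u v w
    have s1 := hskew u ⁅v, w⁆
    have e6 : ω ⁅w, u⁆ v = - ω ⁅u, w⁆ v := by
      rw [show (⁅w, u⁆ : L) = -⁅u, w⁆ by rw [← lie_skew u w, neg_neg],
          map_neg, LinearMap.neg_apply]
    have h2 : 2 * ω u ⁅v, w⁆ = 0 := by
      linear_combination echain + s1 - hc + e6
    exact (mul_eq_zero.mp h2).resolve_left two_ne
  refine ⟨?_, ?_, ?_⟩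
  · ext u
    exact ⟨fun h => dirA u h, fun h => dirB u h⟩
  · ext u
    simp only [Set.mem_setOf_eq]
    constructor
    · intro h v w
      have hc := hclosed u v w
      have hz : ω ⁅v, w⁆ u = 0 := by
        rw [hskew ⁅v, w⁆ u, h v w, neg_zero]
      have e6 : ω ⁅w, u⁆ v = - ω ⁅u, w⁆ v := by
        rw [show (⁅w, u⁆ : L) = -⁅u, w⁆ by rw [← lie_skew u w, neg_neg],
          map_neg, LinearMap.neg_apply]
      have s2 := hskew ⁅u, w⁆ v
      linear_combination hc - hz - e6 + s2
    · intro h v w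
      have hc := hclosed u v w
      have e6 : ω ⁅w, u⁆ v = - ω ⁅u, w⁆ v := by
        rw [show (⁅w, u⁆ : L) = -⁅u, w⁆ by rw [← lie_skew u w, neg_neg],
          map_neg, LinearMap.neg_apply]
      have s1 := hskew u ⁅v, w⁆
      have s2 := hskew ⁅u, w⁆ v
      linear_combination -hc + h v w + e6 - s2 + s1
  · intro u v hu hv
    have h1 : p u v = 0 := dirA u hu v
    have h2 : p v u = 0 := dirA v hv u
    have := hp1 u v
    rw [h1, h2, sub_zero] at this
    exact this.symm
end

section
/- Let (𝔤, [·,·], ω) be a quasi-Frobenius Lie algebra with Levi-Civita product •. Then the center Z(𝔤) equals (𝔤•𝔤)^⊥, where 𝔤•𝔤 is the span of all products u•v and ⊥ denotes the orthogonal with respect to ω. Moreover Z(𝔤) ⊆ [𝔤,𝔤]^⊥. -/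
/-- For a quasi-Frobenius Lie algebra with Levi-Civita product `p`,
`Z(𝔤) = (𝔤•𝔤)^⊥` and `Z(𝔤) ⊆ [𝔤,𝔤]^⊥`. -/
theorem stmt4 {K L : Type*} [Field K] [CharZero K] [LieRing L] [LieAlgebra K L]
    (ω : L →ₗ[K] L →ₗ[K] K)
    (hskew : ∀ u v, ω u v = - ω v u)
    (hnd : ∀ u, (∀ v, ω u v = 0) → u = 0)
    (hclosed : ∀ u v w, ω ⁅u, v⁆ w + ω ⁅v, w⁆ u + ω ⁅w, u⁆ v = 0)
    (p : L →ₗ[K] L →ₗ[K] L)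
    (hp1 : ∀ u v, p u v - p v u = ⁅u, v⁆)
    (hp2 : ∀ u v w, ω (p u v) w = ω v (p u w)) :
    ({u : L | ∀ v : L, ⁅u, v⁆ = 0} = {u : L | ∀ v w : L, ω u (p v w) = 0}) ∧
    (∀ u : L, (∀ v : L, ⁅u, v⁆ = 0) → ∀ v w : L, ω u ⁅v, w⁆ = 0) := by
  -- central elements are orthogonal to the derived algebra
  have hcent : ∀ u : L, (∀ v : L, ⁅u, v⁆ = 0) → ∀ v w : L, ω u ⁅v, w⁆ = 0 := by
    intro u hu v w
    have h := hclosed v w u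
    have h1 : ⁅w, u⁆ = (0 : L) := by rw [← lie_skew, hu w, neg_zero]
    have h2 : ⁅u, v⁆ = (0 : L) := hu v
    rw [h1, h2] at h
    simp only [map_zero, LinearMap.zero_apply, add_zero, zero_add] at h
    rw [hskew]
    rw [h, neg_zero]
  refine ⟨?_, hcent⟩
  ext u
  simp only [Set.mem_setOf_eq]
  constructor
  · intro hu v w
    -- symmetry of (v,w) ↦ ω u (p v w)
    have hsym : ω u (p v w) = ω u (p w v) := by
      have e1 : ω u (p v w - p w v) = ω u ⁅v, w⁆ := by rw [hp1]
      rw [map_sub, hcent u hu v w] at e1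
      linear_combination e1
    -- antisymmetry
    have huvz : p v u = p u v := by
      have := hp1 u v; rw [hu v] at this; exact (sub_eq_zero.mp this).symm
    have huwz : p w u = p u w := by
      have := hp1 u w; rw [hu w] at this; exact (sub_eq_zero.mp this).symm
    have hanti : ω u (p v w) = - ω u (p w v) := by
      calc ω u (p v w) = ω (p v u) w := (hp2 v u w).symm
        _ = ω (p u v) w := by rw [huvz]
        _ = ω v (p u w) := hp2 u v w
        _ = ω v (p w u) := by rw [huwz]
        _ = ω (p w v) u := (hp2 w v u).symm
        _ = - ω u (p w v) := hskew _ _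
    linear_combination (hsym + hanti) / 2
  · intro hu v
    apply hnd
    intro w
    -- ω [u,x] y = ω (p u x) y for all x y
    have key : ∀ x y : L, ω ⁅u, x⁆ y = ω (p u x) y := by
      intro x y
      have e1 : ω (p u x - p x u) y = ω ⁅u, x⁆ y := by rw [hp1]
      rw [map_sub, LinearMap.sub_apply] at e1
      have e2 : ω (p x u) y = ω u (p x y) := hp2 x u y
      rw [e2, hu x y, sub_zero] at e1
      exact e1.symm
    -- orthogonality to brackets
    have hbz : ∀ x y : L, ω ⁅x, y⁆ u = 0 := by
      intro x y
      have e1 : ω (p x y - p y x) u = ω ⁅x, y⁆ u := by rw [hp1]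
      rw [map_sub, LinearMap.sub_apply] at e1
      have e2 : ω (p x y) u = ω y (p x u) := hp2 x y u
      have e3 : ω (p y x) u = ω x (p y u) := hp2 y x u
      have e4 : ω y (p x u) = - ω (p x u) y := hskew _ _
      have e5 : ω x (p y u) = - ω (p y u) x := hskew _ _
      have e6 : ω (p x u) y = ω u (p x y) := hp2 x u y
      have e7 : ω (p y u) x = ω u (p y x) := hp2 y u x
      rw [e2, e3, e4, e5, e6, e7, hu x y, hu y x] at e1
      linear_combination -e1
    -- symmetry of ω [u,v] w in (v,w) from closedness
    have hsymg : ω ⁅u, v⁆ w = ω ⁅u, w⁆ v := by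
      have h := hclosed u v w
      have h2 := hbz v w
      have h3 : ω ⁅w, u⁆ v = - ω ⁅u, w⁆ v := by
        rw [← lie_skew u w, map_neg, LinearMap.neg_apply, neg_neg]
      rw [h2, h3] at h
      linear_combination h
    -- antisymmetry from hp2 and hskew
    have hantig : ω ⁅u, v⁆ w = - ω ⁅u, w⁆ v := by
      rw [key v w, key w v]
      calc ω (p u v) w = ω v (p u w) := hp2 u v w
        _ = - ω (p u w) v := hskew _ _
    linear_combination (hsymg + hantig) / 2
end

section
/- Let (𝔤, [·,·], ω) be a quasi-Frobenius Lie algebra with Levi-Civita product • (the unique product with u•v − v•u = [u,v] and ω(u•v,w) = ω(v,u•w)). Then (𝔤, •) is a right-symmetric algebra: (w•u)•v − w•(u•v) = (w•v)•u − w•(v•u) for all u,v,w ∈ 𝔤. -/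
/-- The Levi-Civita product of a quasi-Frobenius Lie algebra is
right-symmetric. -/
theorem stmt6 {K L : Type*} [Field K] [CharZero K] [LieRing L] [LieAlgebra K L]
    (ω : L →ₗ[K] L →ₗ[K] K)
    (hskew : ∀ u v, ω u v = - ω v u)
    (hnd : ∀ u, (∀ v, ω u v = 0) → u = 0)
    (hclosed : ∀ u v w, ω ⁅u, v⁆ w + ω ⁅v, w⁆ u + ω ⁅w, u⁆ v = 0)
    (p : L →ₗ[K] L →ₗ[K] L)
    (hp1 : ∀ u v, p u v - p v u = ⁅u, v⁆)
    (hp2 : ∀ u v w, ω (p u v) w = ω v (p u w)) :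
    ∀ u v w : L, p (p w u) v - p w (p u v) = p (p w v) u - p w (p v u) := by
  -- Key explicit formula: ω (p u v) x = ω u ⁅v, x⁆
  have key : ∀ u v x : L, ω (p u v) x = ω u ⁅v, x⁆ := by
    intro u v x
    have e1 := hp2 u v x
    have e3 := hp2 x v u
    have e5 := hp2 v x u
    have e7 := hskew x (p u v)
    have e8 := hclosed u v x
    have f2 : ω v (p u x) - ω v (p x u) = ω v ⁅u, x⁆ := by
      rw [← map_sub, hp1]
    have f4 : ω (p x v) u - ω (p v x) u = ω ⁅x, v⁆ u := by
      rw [← LinearMap.sub_apply, ← map_sub, hp1]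
    have f6 : ω x (p u v) - ω x (p v u) = ω x ⁅u, v⁆ := by
      rw [← map_sub, hp1]
    have s1 : ω v ⁅u, x⁆ = - ω ⁅u, x⁆ v := hskew v ⁅u, x⁆
    have s2 : ω ⁅x, v⁆ u = - ω ⁅v, x⁆ u := by
      have h : ⁅x, v⁆ = -⁅v, x⁆ := (lie_skew x v).symm
      simp only [h, map_neg, LinearMap.neg_apply]
    have s3 : ω x ⁅u, v⁆ = - ω ⁅u, v⁆ x := hskew x ⁅u, v⁆
    have s4 : ω u ⁅v, x⁆ = - ω ⁅v, x⁆ u := hskew u ⁅v, x⁆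
    have s5 : ω ⁅u, x⁆ v = - ω ⁅x, u⁆ v := by
      have h : ⁅u, x⁆ = -⁅x, u⁆ := (lie_skew u x).symm
      simp only [h, map_neg, LinearMap.neg_apply]
    linear_combination (e1 + f2 - e3 + f4 + e5 - f6 + e7 - s3 + s2 + s1 - s5 + e8 - 2*s4) / 2
  intro u v w
  set A := (p (p w u) v - p w (p u v)) - (p (p w v) u - p w (p v u)) with hA
  have hA0 : A = 0 := by
    apply hnd
    intro x
    have h1 : ω (p (p w u) v) x = ω w ⁅u, ⁅v, x⁆⁆ := by
      rw [key, key]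
    have h2 : ω (p w (p u v)) x = ω w ⁅p u v, x⁆ := key w (p u v) x
    have h3 : ω (p (p w v) u) x = ω w ⁅v, ⁅u, x⁆⁆ := by
      rw [key, key]
    have h4 : ω (p w (p v u)) x = ω w ⁅p v u, x⁆ := key w (p v u) x
    have hb : ω w ⁅p u v, x⁆ - ω w ⁅p v u, x⁆ = ω w ⁅⁅u, v⁆, x⁆ := by
      rw [← map_sub, ← sub_lie, hp1]
    have hj : ω w ⁅u, ⁅v, x⁆⁆ - ω w ⁅v, ⁅u, x⁆⁆ = ω w ⁅⁅u, v⁆, x⁆ := by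
      rw [← map_sub]
      congr 1
      rw [leibniz_lie u v x]
      abel
    have expand : ω A x
        = ω (p (p w u) v) x - ω (p w (p u v)) x
          - ω (p (p w v) u) x + ω (p w (p v u)) x := by
      rw [hA]
      simp [map_sub, LinearMap.sub_apply]
      ring
    rw [expand, h1, h2, h3, h4]
    linear_combination hj - hb
  exact sub_eq_zero.mp hA0
end

section
/- Let (𝔞, ∘) be a non-associative algebra over a field of characteristic zero with a non-degenerate skew-symmetric form ω that is closed for ∘ (i.e., ω(u∘v,w) + ω(v∘w,u) + ω(w∘u,v) = 0). Then the following are equivalent: (i) (𝔞,∘) is left-symmetric and ω(u∘v, w) = ω(u, w∘v) for all u,v,w; (ii) the commutator bracket [u,v] = u∘v − v∘u makes (𝔞, [·,·], ω) a quasi-Frobenius Lie algebra and ω(u∘v, w) = −ω(v, [u,w]) for all u,v,w. -/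
/-- Equivalence between left-symmetric structures with ω-symmetric
right multiplications and quasi-Frobenius Lie structures on the commutator bracket
with `ω(u∘v,w) = −ω(v,[u,w])`. -/
theorem stmt7 {K A : Type*} [Field K] [CharZero K] [AddCommGroup A] [Module K A]
    (m : A →ₗ[K] A →ₗ[K] A)
    (ω : A →ₗ[K] A →ₗ[K] K)
    (hskew : ∀ u v, ω u v = - ω v u)
    (hnd : ∀ u, (∀ v, ω u v = 0) → u = 0)
    (hclosed : ∀ u v w, ω (m u v) w + ω (m v w) u + ω (m w u) v = 0) :
    ((∀ u v w, m (m u v) w - m u (m v w) = m (m v u) w - m v (m u w)) ∧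
      (∀ u v w, ω (m u v) w = ω u (m w v)))
    ↔
    ((∀ u v w : A,
        (m (m u v - m v u) w - m w (m u v - m v u)) +
        (m (m v w - m w v) u - m u (m v w - m w v)) +
        (m (m w u - m u w) v - m v (m w u - m u w)) = 0) ∧
      (∀ u v w, ω (m u v - m v u) w + ω (m v w - m w v) u + ω (m w u - m u w) v = 0) ∧
      (∀ u v w, ω (m u v) w = - ω v (m u w - m w u))) := by
  constructor
  · rintro ⟨hls, hsym⟩
    refine ⟨?_, ?_, ?_⟩
    · intro u v w
      have e1 := hls u v w
      have e2 := hls v w u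
      have e3 := hls w u v
      simp only [map_sub, LinearMap.sub_apply]
      linear_combination (norm := module) e1 + e2 + e3
    · intro u v w
      have c1 := hclosed u v w
      have c2 := hclosed w v u
      simp only [map_sub, LinearMap.sub_apply]
      linear_combination c1 - c2
    · intro u v w
      have c1 := hclosed u v w
      have s1 := hsym v w u
      have k1 := hskew (m w u) v
      simp only [map_sub, LinearMap.sub_apply]
      linear_combination c1 - s1 - k1
  · rintro ⟨hjac, hbr, hmix⟩
    have hsym : ∀ u v w, ω (m u v) w = ω u (m w v) := by
      intro u v w
      have c1 := hclosed w u v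
      have x1 := hmix w u v
      have k1 := hskew (m v w) u
      simp only [map_sub, LinearMap.sub_apply] at x1 ⊢
      linear_combination c1 - x1 - k1
    refine ⟨?_, hsym⟩
    intro u v w
    rw [← sub_eq_zero]
    apply hnd
    intro d
    have h1a := hmix (m u v) w d
    have h1b := hmix (m v u) w d
    have h2 := hmix u (m v w) d
    have h3 := hmix v (m u w) d
    have g1 := hmix v w (m u d)
    have g2 := hmix v w (m d u)
    have g3 := hmix u w (m v d)
    have g4 := hmix u w (m d v)
    have jz : ω w ((m (m u v - m v u) d - m d (m u v - m v u)) +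
        (m (m v d - m d v) u - m u (m v d - m d v)) +
        (m (m d u - m u d) v - m v (m d u - m u d))) = 0 := by
      rw [hjac u v d]; simp
    simp only [map_sub, map_add, LinearMap.sub_apply, LinearMap.add_apply] at h1a h1b h2 h3 g1 g2 g3 g4 jz ⊢
    linear_combination h1a - h1b - h2 + h3 + g1 - g2 - g3 + g4 - jz
end

section
/- Let (E, ω) be a finite-dimensional symplectic vector space over a field of characteristic zero. Then there exists a nonzero symmetric bilinear map f : E × E → E such that ω(f(u,v), w) = −ω(v, f(u,w)) for all u,v,w ∈ E. Consequently, if ⋆ is a symplectic product on a quasi-Frobenius Lie algebra (𝔤, [·,·], ω), then u ⋆̄ v := u⋆v + f(u,v) is another (distinct) symplectic product; in particular symplectic products are not unique. -/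
lemma stmt9_aux {K E : Type*} [Field K] [AddCommGroup E] [Module K E] [Nontrivial E]
    (ω : E →ₗ[K] E →ₗ[K] K)
    (hskew : ∀ u v, ω u v = - ω v u)
    (hnd : ∀ u, (∀ v, ω u v = 0) → u = 0) :
    ∃ f : E →ₗ[K] E →ₗ[K] E, f ≠ 0 ∧ (∀ u v, f u v = f v u) ∧
      (∀ u v w, ω (f u v) w = - ω v (f u w)) := by
  obtain ⟨a, ha⟩ := exists_ne (0 : E)
  have hex : ¬ (∀ v, ω a v = 0) := fun h => ha (hnd a h)
  push_neg at hex
  obtain ⟨b, hb⟩ := hex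
  refine ⟨(ω a).smulRight ((ω a).smulRight a), ?_, ?_, ?_⟩
  · intro h
    have h2 : ω a b • (ω a b • a) = 0 := by
      have := congrFun (congrArg DFunLike.coe (congrFun (congrArg DFunLike.coe h) b)) b
      simpa using this
    rw [smul_smul, smul_eq_zero] at h2
    rcases h2 with h3 | h3
    · exact hb (mul_self_eq_zero.1 h3)
    · exact ha h3
  · intro u v
    simp [smul_smul, mul_comm]
  · intro u v w
    simp only [LinearMap.smulRight_apply, map_smul, LinearMap.smul_apply, smul_eq_mul]
    rw [hskew v a]
    ring

/-- On a (nontrivial, finite-dimensional) symplectic vector space there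
is a nonzero symmetric bilinear map `f` with `ω(f(u,v),w) = −ω(v,f(u,w))`; hence a
symplectic product on a quasi-Frobenius Lie algebra can be deformed to a distinct
symplectic product, so symplectic products are not unique. -/
theorem stmt9 {K E L : Type*} [Field K] [CharZero K]
    [AddCommGroup E] [Module K E] [FiniteDimensional K E] [Nontrivial E]
    (ωE : E →ₗ[K] E →ₗ[K] K)
    (hEskew : ∀ u v, ωE u v = - ωE v u)
    (hEnd : ∀ u, (∀ v, ωE u v = 0) → u = 0)
    [LieRing L] [LieAlgebra K L] [FiniteDimensional K L] [Nontrivial L]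
    (ω : L →ₗ[K] L →ₗ[K] K)
    (hskew : ∀ u v, ω u v = - ω v u)
    (hnd : ∀ u, (∀ v, ω u v = 0) → u = 0)
    (hclosed : ∀ u v w, ω ⁅u, v⁆ w + ω ⁅v, w⁆ u + ω ⁅w, u⁆ v = 0)
    (p : L →ₗ[K] L →ₗ[K] L)
    (hp1 : ∀ u v, p u v - p v u = ⁅u, v⁆)
    (hp2 : ∀ u v w, ω (p u v) w = - ω v (p u w)) :
    (∃ f : E →ₗ[K] E →ₗ[K] E, f ≠ 0 ∧ (∀ u v, f u v = f v u) ∧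
      (∀ u v w, ωE (f u v) w = - ωE v (f u w))) ∧
    (∃ f : L →ₗ[K] L →ₗ[K] L, f ≠ 0 ∧ (∀ u v, f u v = f v u) ∧
      (∀ u v w, ω (f u v) w = - ω v (f u w)) ∧
      (∀ u v, (p + f) u v - (p + f) v u = ⁅u, v⁆) ∧
      (∀ u v w, ω ((p + f) u v) w = - ω v ((p + f) u w)) ∧
      p + f ≠ p) := by
  obtain ⟨fE, hfE0, hfEs, hfEc⟩ := stmt9_aux ωE hEskew hEnd
  obtain ⟨f, hf0, hfs, hfc⟩ := stmt9_aux ω hskew hnd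
  refine ⟨⟨fE, hfE0, hfEs, hfEc⟩, f, hf0, hfs, hfc, ?_, ?_, ?_⟩
  · intro u v
    have := hp1 u v
    simp only [LinearMap.add_apply]
    rw [hfs u v]
    abel_nf
    linear_combination (norm := abel) hp1 u v
  · intro u v w
    simp only [LinearMap.add_apply, map_add]
    rw [hp2 u v w, hfc u v w]
    ring
  · intro h
    exact hf0 (by simpa using congrArg (· - p) h)
end

section
/- Let (𝔤, [·,·], ω) be a quasi-Frobenius Lie algebra over a field of characteristic zero. Then the product ⋆ defined by ω(u⋆v, w) = (1/3)(ω([u,v],w) + ω([u,w],v)) is a symplectic product: it satisfies u⋆v − v⋆u = [u,v] and ω(u⋆v, w) = −ω(v, u⋆w) for all u,v,w. Moreover it is the unique symplectic product expressible as ω(u⋆v,w) = a·ω([u,v],w) + b·ω([u,w],v) + c·ω([v,w],u) for scalars a,b,c. -/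
/-- The natural symplectic product of a quasi-Frobenius Lie algebra,
defined by `ω(u⋆v,w) = (1/3)(ω([u,v],w) + ω([u,w],v))`, exists, is a symplectic
product, and is the unique symplectic product expressible as a combination
`a·ω([u,v],w) + b·ω([u,w],v) + c·ω([v,w],u)`. -/
theorem stmt10 {K L : Type*} [Field K] [CharZero K] [LieRing L] [LieAlgebra K L]
    [FiniteDimensional K L]
    (ω : L →ₗ[K] L →ₗ[K] K)
    (hskew : ∀ u v, ω u v = - ω v u)
    (hnd : ∀ u, (∀ v, ω u v = 0) → u = 0)
    (hclosed : ∀ u v w, ω ⁅u, v⁆ w + ω ⁅v, w⁆ u + ω ⁅w, u⁆ v = 0) :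
    (∃ s : L →ₗ[K] L →ₗ[K] L,
      ∀ u v w, ω (s u v) w = (1/3 : K) * (ω ⁅u, v⁆ w + ω ⁅u, w⁆ v)) ∧
    (∀ s : L →ₗ[K] L →ₗ[K] L,
      (∀ u v w, ω (s u v) w = (1/3 : K) * (ω ⁅u, v⁆ w + ω ⁅u, w⁆ v)) →
      (∀ u v, s u v - s v u = ⁅u, v⁆) ∧
      (∀ u v w, ω (s u v) w = - ω v (s u w)) ∧
      (∀ (a b c : K) (t : L →ₗ[K] L →ₗ[K] L),
        (∀ u v w, ω (t u v) w = a * ω ⁅u, v⁆ w + b * ω ⁅u, w⁆ v + c * ω ⁅v, w⁆ u) →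
        (∀ u v, t u v - t v u = ⁅u, v⁆) →
        (∀ u v w, ω (t u v) w = - ω v (t u w)) →
        t = s)) := by
  -- ω as a map to the dual is bijective
  have hinj : Function.Injective ω := by
    rw [injective_iff_map_eq_zero]
    intro x hx
    exact hnd x (fun v => by rw [hx]; rfl)
  have hbij : Function.Bijective ω :=
    ⟨hinj, (LinearMap.injective_iff_surjective_of_finrank_eq_finrank
      (Subspace.dual_finrank_eq (K := K) (V := L)).symm).mp hinj⟩
  let e : L ≃ₗ[K] Module.Dual K L := LinearEquiv.ofBijective ω hbij
  have he : ∀ f : Module.Dual K L, ω (e.symm f) = f := fun f => e.apply_symm_apply f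
  -- bracket antisymmetry in ω
  have hba : ∀ x y z : L, ω ⁅x, y⁆ z = - ω ⁅y, x⁆ z := by
    intro x y z
    rw [← lie_skew, map_neg]
    rfl
  -- master relation from closedness
  have hrel : ∀ u v w : L, ω ⁅u, v⁆ w = ω ⁅u, w⁆ v - ω ⁅v, w⁆ u := by
    intro u v w
    have h := hclosed u v w
    have h2 := hba w u v
    linear_combination h - h2
  -- the bilinear map H u v = ω ⁅u, v⁆
  let H : L →ₗ[K] L →ₗ[K] Module.Dual K L := (LieAlgebra.ad K L).compr₂ ω
  let T : L →ₗ[K] L →ₗ[K] Module.Dual K L :=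
    (1/3 : K) • (H + LinearMap.lflip.toLinearMap ∘ₗ H)
  let s₀ : L →ₗ[K] L →ₗ[K] L := T.compr₂ e.symm.toLinearMap
  have hs₀ : ∀ u v w, ω (s₀ u v) w = (1/3 : K) * (ω ⁅u, v⁆ w + ω ⁅u, w⁆ v) := by
    intro u v w
    show ω (e.symm (T u v)) w = _
    rw [he]
    simp [T, H, LieAlgebra.ad_apply, smul_eq_mul]
    ring
  -- key extensionality
  have key : ∀ x y : L, (∀ w, ω x w = ω y w) → x = y := by
    intro x y h
    have h0 : x - y = 0 := hnd _ (fun w => by rw [map_sub, LinearMap.sub_apply, h w, sub_self])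
    exact sub_eq_zero.mp h0
  refine ⟨⟨s₀, hs₀⟩, ?_⟩
  intro s hs
  refine ⟨?_, ?_, ?_⟩
  · intro u v
    apply key
    intro w
    rw [map_sub, LinearMap.sub_apply, hs u v w, hs v u w]
    have h1 := hba v u w
    have h2 := hrel u v w
    linear_combination (-1/3 : K) * h1 - (1/3 : K) * h2
  · intro u v w
    rw [hs u v w, hskew v (s u w), hs u w v]
    ring
  · intro a b c t ht hcomm hanti
    -- derived facts about t
    have hanti' : ∀ u v w, ω (t u v) w = ω (t u w) v := by
      intro u v w
      rw [hanti u v w, hskew v (t u w)]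
      ring
    have hcomm' : ∀ u v w : L, ω (t u v) w - ω (t v u) w = ω ⁅u, v⁆ w := by
      intro u v w
      rw [← LinearMap.sub_apply, ← map_sub, hcomm u v]
    ext u v
    apply key
    intro w
    rw [hs u v w]
    have E1 := ht u v w
    have E2 := ht u w v
    have E3 := ht v u w
    have E4 := ht w u v
    have E5 := ht v w u
    have S1 := hanti' u v w
    have S2 := hcomm' u v w
    have S3 := hcomm' u w v
    have S4 := hanti' v u w
    have P1 := hba v u w
    have P2 := hba w u v
    have P3 := hba w v u
    have R := hrel u v w
    have hα : (a - b - 2*c) * (ω ⁅u, v⁆ w - ω ⁅u, w⁆ v) = 0 := by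
      linear_combination S1 - E1 + E2 + c * P3 - 2 * c * R
    have hβA : (2*a + b - c - 1) * ω ⁅u, v⁆ w = 0 := by
      linear_combination S2 - E1 + E3 + a * P1 + (b - c) * R
    have hβB : (2*a + b - c - 1) * ω ⁅u, w⁆ v = 0 := by
      linear_combination S3 - E2 + E4 + a * P2 + (b - c) * P3 + (c - b) * R
    have hαB : (a - b - 2*c) * ω ⁅u, w⁆ v = 0 := by
      linear_combination E3 - E5 - S4 + (a - b) * P1 - c * P2 + (b - a) * R
    have hαA : (a - b - 2*c) * ω ⁅u, v⁆ w = 0 := by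
      linear_combination hα + hαB
    linear_combination E1 + c * R + (1/3 : K) * hβA + (1/3 : K) * hαA
      + (1/3 : K) * hβB - (2/3 : K) * hαB
end

section
/- Let (𝔤, [·,·], ω) be a quasi-Frobenius Lie algebra and ⋆ its natural symplectic product, defined by ω(u⋆v,w) = (1/3)(ω([u,v],w) + ω([u,w],v)). Then for every u ∈ 𝔤, the left and right multiplications satisfy L⋆_u = (1/3)(ad_u − ad_u*) and R⋆_u = −(1/3)(2 ad_u + ad_u*), where ad_u* denotes the adjoint of ad_u with respect to ω (i.e., ω(ad_u v, w) = ω(v, ad_u* w)). -/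
/-- For the natural symplectic product of a quasi-Frobenius Lie
algebra one has `L⋆_u = (1/3)(ad_u − ad_u*)` and `R⋆_u = −(1/3)(2 ad_u + ad_u*)`,
where `ad_u*` is the ω-adjoint of `ad_u`. -/
theorem stmt11 {K L : Type*} [Field K] [CharZero K] [LieRing L] [LieAlgebra K L]
    (ω : L →ₗ[K] L →ₗ[K] K)
    (hskew : ∀ u v, ω u v = - ω v u)
    (hnd : ∀ u, (∀ v, ω u v = 0) → u = 0)
    (hclosed : ∀ u v w, ω ⁅u, v⁆ w + ω ⁅v, w⁆ u + ω ⁅w, u⁆ v = 0)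
    (s : L →ₗ[K] L →ₗ[K] L)
    (hs : ∀ u v w, ω (s u v) w = (1/3 : K) * (ω ⁅u, v⁆ w + ω ⁅u, w⁆ v)) :
    ∀ (u : L) (A : L →ₗ[K] L),
      (∀ v w, ω ⁅u, v⁆ w = ω v (A w)) →
      (∀ v, s u v = (1/3 : K) • (⁅u, v⁆ - A v)) ∧
      (∀ v, s v u = -(1/3 : K) • ((2 : K) • ⁅u, v⁆ + A v)) := by
  intro u A hA
  have key : ∀ x y : L, (∀ w, ω x w = ω y w) → x = y := by
    intro x y h
    have h0 : ∀ w, ω (x - y) w = 0 := by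
      intro w
      simp [h w]
    have := hnd (x - y) h0
    exact sub_eq_zero.mp this
  constructor
  · intro v
    apply key
    intro w
    have h1 : ω ⁅u, w⁆ v = - ω (A v) w := by
      rw [hA w v, hskew]
    rw [hs]
    simp only [map_smul, map_sub, LinearMap.smul_apply, LinearMap.sub_apply, smul_eq_mul]
    rw [h1]; ring
  · intro v
    apply key
    intro w
    have h1 : ω (A v) w = - ω ⁅u, w⁆ v := by
      rw [hA w v, hskew]
    have h2 := hclosed u v w
    have h3 : ω ⁅w, u⁆ v = - ω ⁅u, w⁆ v := by
      rw [← lie_skew u w, map_neg, LinearMap.neg_apply]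
      exact (neg_neg _).symm
    rw [hs]
    simp only [map_neg, map_smul, map_add, LinearMap.neg_apply, LinearMap.smul_apply,
      LinearMap.add_apply, smul_eq_mul]
    rw [h1]
    rw [h3] at h2
    have h4 : ω ⁅v, u⁆ w = - ω ⁅u, v⁆ w := by
      rw [← lie_skew u v, map_neg, LinearMap.neg_apply]
      exact (neg_neg _).symm
    rw [h4]
    linear_combination (1/3 : K) * h2
end

section
/- Let (𝔤, [·,·], ω) be a quasi-Frobenius Lie algebra with natural symplectic product ⋆. Then the center satisfies Z(𝔤) = (𝔤⋆𝔤)^⊥ = { u : v⋆u = 0 for all v } = { u : u⋆v = v⋆u = 0 for all v } = { u ∈ [𝔤,𝔤]^⊥ : u⋆v = 0 for all v }. -/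
/-- Characterizations of the center of a quasi-Frobenius Lie algebra
in terms of its natural symplectic product. -/
theorem stmt13 {K L : Type*} [Field K] [CharZero K] [LieRing L] [LieAlgebra K L]
    (ω : L →ₗ[K] L →ₗ[K] K)
    (hskew : ∀ u v, ω u v = - ω v u)
    (hnd : ∀ u, (∀ v, ω u v = 0) → u = 0)
    (hclosed : ∀ u v w, ω ⁅u, v⁆ w + ω ⁅v, w⁆ u + ω ⁅w, u⁆ v = 0)
    (s : L →ₗ[K] L →ₗ[K] L)
    (hs : ∀ u v w, ω (s u v) w = (1/3 : K) * (ω ⁅u, v⁆ w + ω ⁅u, w⁆ v)) :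
    ({u : L | ∀ v : L, ⁅u, v⁆ = 0} = {u : L | ∀ v w : L, ω u (s v w) = 0}) ∧
    ({u : L | ∀ v : L, ⁅u, v⁆ = 0} = {u : L | ∀ v : L, s v u = 0}) ∧
    ({u : L | ∀ v : L, ⁅u, v⁆ = 0} = {u : L | ∀ v : L, s u v = 0 ∧ s v u = 0}) ∧
    ({u : L | ∀ v : L, ⁅u, v⁆ = 0} =
      {u : L | (∀ v w : L, ω u ⁅v, w⁆ = 0) ∧ ∀ v : L, s u v = 0}) := by
  have hln : ∀ (x y w : L), ω ⁅x, y⁆ w = - ω ⁅y, x⁆ w := by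
    intro x y w
    rw [(lie_skew y x).symm, map_neg, LinearMap.neg_apply, neg_neg]
  -- centrality propagates: if u is central then ω ⁅v, w⁆ u = 0
  have hcen : ∀ u : L, (∀ v : L, ⁅u, v⁆ = 0) → ∀ v w : L, ω ⁅v, w⁆ u = 0 := by
    intro u hu v w
    have h := hclosed u v w
    have h2 : ⁅w, u⁆ = 0 := by rw [(lie_skew w u).symm, hu w, neg_zero]
    rw [hu v, h2] at h
    simpa using h
  have hsl : ∀ u : L, (∀ v : L, ⁅u, v⁆ = 0) → ∀ v : L, s u v = 0 := by
    intro u hu v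
    apply hnd
    intro w
    rw [hs, hu v, hu w]
    simp
  have hsr : ∀ u : L, (∀ v : L, ⁅u, v⁆ = 0) → ∀ v : L, s v u = 0 := by
    intro u hu v
    apply hnd
    intro w
    have h1 : ⁅v, u⁆ = 0 := by rw [(lie_skew v u).symm, hu v, neg_zero]
    rw [hs, h1, hcen u hu v w]
    simp
  -- key converse
  have hconv : ∀ u : L, (∀ v w : L, ω ⁅v, u⁆ w + ω ⁅v, w⁆ u = 0) →
      ∀ v : L, ⁅u, v⁆ = 0 := by
    intro u h v
    have hzero : ⁅v, u⁆ = 0 := by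
      apply hnd
      intro w
      have e1 := hclosed u v w
      have e2 := h v w
      have e3 := h w v
      rw [hln u v w] at e1
      have e4 : ω ⁅w, v⁆ u = - ω ⁅v, w⁆ u := hln w v u
      linear_combination (-1/3 : K) * e1 + (2/3 : K) * e2 + (1/3 : K) * e3
        + (-1/3 : K) * e4
    rw [(lie_skew u v).symm, hzero, neg_zero]
  refine ⟨?_, ?_, ?_, ?_⟩
  · ext u
    simp only [Set.mem_setOf_eq]
    constructor
    · intro hu v w
      have h1 : ⁅v, u⁆ = 0 := by rw [(lie_skew v u).symm, hu v, neg_zero]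
      rw [hskew u (s v w), hs v w u, hcen u hu v w, h1]
      simp
    · intro h
      apply hconv
      intro v w
      have h3 := hs v w u
      rw [hskew (s v w) u, h v w, neg_zero] at h3
      linear_combination (-3 : K) * h3
  · ext u
    simp only [Set.mem_setOf_eq]
    constructor
    · intro hu v
      exact hsr u hu v
    · intro h
      apply hconv
      intro v w
      have h1 := hs v u w
      rw [h v] at h1
      simp only [map_zero, LinearMap.zero_apply] at h1
      linear_combination (-3 : K) * h1
  · ext u
    simp only [Set.mem_setOf_eq]
    constructor
    · intro hu v
      exact ⟨hsl u hu v, hsr u hu v⟩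
    · intro h
      apply hconv
      intro v w
      have h1 := hs v u w
      rw [(h v).2] at h1
      simp only [map_zero, LinearMap.zero_apply] at h1
      linear_combination (-3 : K) * h1
  · ext u
    simp only [Set.mem_setOf_eq]
    constructor
    · intro hu
      refine ⟨fun v w => ?_, hsl u hu⟩
      rw [hskew u ⁅v, w⁆, hcen u hu v w, neg_zero]
    · rintro ⟨h1, h2⟩ v
      have hzero : ⁅v, u⁆ = 0 := by
        apply hnd
        intro w
        have ha := hs u v w
        rw [h2 v, hln u v w, hln u w v] at ha
        simp only [map_zero, LinearMap.zero_apply] at ha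
        have hb : ω ⁅v, w⁆ u = 0 := by rw [hskew ⁅v, w⁆ u, h1 v w, neg_zero]
        have e1 := hclosed u v w
        rw [hln u v w] at e1
        linear_combination (-1/2 : K) * e1 + (3/2 : K) * ha + (1/2 : K) * hb
      rw [(lie_skew u v).symm, hzero, neg_zero]
end

section
/- Let (𝔤, [·,·], ω) be a flat quasi-Frobenius Lie algebra, i.e., the natural symplectic product ⋆ (given by ω(u⋆v,w) = (1/3)(ω([u,v],w) + ω([u,w],v))) is left-symmetric. Then for all u, v ∈ [𝔤,𝔤]^⊥ one has ad_u ∘ ad_v = 0; in particular ad_u² = 0 for every u ∈ [𝔤,𝔤]^⊥. -/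
/-- In a flat quasi-Frobenius Lie algebra, `ad_u ∘ ad_v = 0` for all
`u, v ∈ [𝔤,𝔤]^⊥`; in particular `ad_u² = 0`. -/
theorem stmt14 {K L : Type*} [Field K] [CharZero K] [LieRing L] [LieAlgebra K L]
    (ω : L →ₗ[K] L →ₗ[K] K)
    (hskew : ∀ u v, ω u v = - ω v u)
    (hnd : ∀ u, (∀ v, ω u v = 0) → u = 0)
    (hclosed : ∀ u v w, ω ⁅u, v⁆ w + ω ⁅v, w⁆ u + ω ⁅w, u⁆ v = 0)
    (s : L →ₗ[K] L →ₗ[K] L)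
    (hs : ∀ u v w, ω (s u v) w = (1/3 : K) * (ω ⁅u, v⁆ w + ω ⁅u, w⁆ v))
    (hflat : ∀ u v w, s ⁅u, v⁆ w = s u (s v w) - s v (s u w)) :
    (∀ u v : L, (∀ a b : L, ω u ⁅a, b⁆ = 0) → (∀ a b : L, ω v ⁅a, b⁆ = 0) →
      ∀ w : L, ⁅u, ⁅v, w⁆⁆ = 0) ∧
    (∀ u : L, (∀ a b : L, ω u ⁅a, b⁆ = 0) → ∀ w : L, ⁅u, ⁅u, w⁆⁆ = 0) := by
  -- extensionality from nondegeneracy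
  have hext : ∀ x y : L, (∀ w, ω x w = ω y w) → x = y := by
    intro x y h
    have hxy : x - y = 0 := hnd _ (fun v => by simp [h v])
    exact sub_eq_zero.mp hxy
  -- left multiplication by an orthogonal element
  have key1 : ∀ u : L, (∀ a b : L, ω u ⁅a, b⁆ = 0) →
      ∀ x : L, s u x = (2/3 : K) • ⁅u, x⁆ := by
    intro u hu x
    apply hext
    intro w
    rw [hs]
    have hc := hclosed u x w
    have h1 : ω ⁅x, w⁆ u = 0 := by rw [← neg_eq_zero, ← hskew]; exact hu x w
    have h2 : ω ⁅w, u⁆ x = - ω ⁅u, w⁆ x := by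
      have : (⁅w, u⁆ : L) = -⁅u, w⁆ := (lie_skew w u).symm
      rw [this, map_neg]; simp
    have h3 : ω ⁅u, w⁆ x = ω ⁅u, x⁆ w := by
      rw [h1, h2] at hc; linear_combination -hc
    rw [map_smul]
    simp only [LinearMap.smul_apply, smul_eq_mul]
    rw [h3]
    ring
  -- right multiplication by an orthogonal element
  have key2 : ∀ v : L, (∀ a b : L, ω v ⁅a, b⁆ = 0) →
      ∀ x : L, s x v = (1/3 : K) • ⁅x, v⁆ := by
    intro v hv x
    apply hext
    intro w
    rw [hs]
    have h1 : ω ⁅x, w⁆ v = 0 := by rw [hskew]; simp [hv x w]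
    rw [map_smul]
    simp only [LinearMap.smul_apply, smul_eq_mul]
    rw [h1]
    ring
  -- two orthogonal elements commute
  have key3 : ∀ u v : L, (∀ a b : L, ω u ⁅a, b⁆ = 0) → (∀ a b : L, ω v ⁅a, b⁆ = 0) →
      ⁅u, v⁆ = 0 := by
    intro u v hu hv
    have h := (key1 u hu v).symm.trans (key2 v hv u)
    have h' : ((2/3 : K) - (1/3 : K)) • ⁅u, v⁆ = 0 := by
      rw [sub_smul, h, sub_self]
    have : ((2:K)/3 - 1/3) ≠ 0 := by norm_num
    rcases smul_eq_zero.mp h' with h0 | h0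
    · exact absurd h0 this
    · exact h0
  -- main statement
  have main : ∀ u v : L, (∀ a b : L, ω u ⁅a, b⁆ = 0) → (∀ a b : L, ω v ⁅a, b⁆ = 0) →
      ∀ w : L, ⁅u, ⁅v, w⁆⁆ = 0 := by
    intro u v hu hv w
    have h0 : ⁅u, v⁆ = 0 := key3 u v hu hv
    have hf := hflat u w v
    -- LHS
    rw [key2 v hv ⁅u, w⁆] at hf
    -- RHS pieces
    rw [key2 v hv w, map_smul, key1 u hu ⁅w, v⁆, key1 u hu v, h0, smul_zero, map_zero,
      sub_zero, smul_smul] at hf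
    -- Jacobi: ⁅⁅u,w⁆,v⁆ = ⁅u,⁅w,v⁆⁆ - ⁅w,⁅u,v⁆⁆ = ⁅u,⁅w,v⁆⁆
    have hj : ⁅⁅u, w⁆, v⁆ = ⁅u, ⁅w, v⁆⁆ := by
      rw [lie_lie, h0, lie_zero, sub_zero]
    rw [hj] at hf
    have h' : ((1/3 : K) - (1/3 * (2/3) : K)) • ⁅u, ⁅w, v⁆⁆ = 0 := by
      rw [sub_smul, hf, sub_self]
    have hne : ((1/3 : K) - (1/3 * (2/3) : K)) ≠ 0 := by norm_num
    have hz : ⁅u, ⁅w, v⁆⁆ = 0 := by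
      rcases smul_eq_zero.mp h' with h0 | h0
      · exact absurd h0 hne
      · exact h0
    have : ⁅v, w⁆ = -⁅w, v⁆ := by rw [← lie_skew]
    rw [this, lie_neg, hz, neg_zero]
  exact ⟨main, fun u hu w => main u u hu hu w⟩
end

section
/- Let (𝔤, [·,·], ω) be a flat quasi-Frobenius Lie algebra with natural symplectic product ⋆. Then the left annihilator N_ℓ(𝔤,⋆) = { u : u⋆v = 0 for all v } is a two-sided ideal of (𝔤, ⋆), and [𝔤, [𝔤,𝔤]^⊥] ⊆ N_ℓ(𝔤,⋆). -/
/-- In a flat quasi-Frobenius Lie algebra, the left annihilator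
`N_ℓ(𝔤,⋆) = { u : u⋆v = 0 ∀v }` is a two-sided ideal of `(𝔤,⋆)` and contains
`[𝔤, [𝔤,𝔤]^⊥]`. -/
theorem stmt15 {K L : Type*} [Field K] [CharZero K] [LieRing L] [LieAlgebra K L]
    (ω : L →ₗ[K] L →ₗ[K] K)
    (hskew : ∀ u v, ω u v = - ω v u)
    (hnd : ∀ u, (∀ v, ω u v = 0) → u = 0)
    (hclosed : ∀ u v w, ω ⁅u, v⁆ w + ω ⁅v, w⁆ u + ω ⁅w, u⁆ v = 0)
    (s : L →ₗ[K] L →ₗ[K] L)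
    (hs : ∀ u v w, ω (s u v) w = (1/3 : K) * (ω ⁅u, v⁆ w + ω ⁅u, w⁆ v))
    (hflat : ∀ u v w, s ⁅u, v⁆ w = s u (s v w) - s v (s u w)) :
    (∀ u : L, (∀ v, s u v = 0) →
      ∀ v : L, (∀ w, s (s u v) w = 0) ∧ (∀ w, s (s v u) w = 0)) ∧
    (∀ u v : L, (∀ a b : L, ω v ⁅a, b⁆ = 0) → ∀ w : L, s ⁅u, v⁆ w = 0) := by
  constructor
  · intro u hu v
    -- From u ∈ N: ω ⁅u,x⁆ y + ω ⁅u,y⁆ x = 0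
    have h0 : ∀ x y : L, ω ⁅u, x⁆ y + ω ⁅u, y⁆ x = 0 := by
      intro x y
      have h : (1/3 : K) * (ω ⁅u, x⁆ y + ω ⁅u, y⁆ x) = 0 := by
        rw [← hs u x y, hu x]; simp
      exact (mul_eq_zero.mp h).resolve_left (by norm_num)
    have hsvu : s v u = ⁅v, u⁆ := by
      have key : ∀ w, ω (s v u - ⁅v, u⁆) w = 0 := by
        intro w
        have h1 := hs v u w
        have h2 := hclosed u v w
        have h3 := h0 v w
        have e1 : ω ⁅w, u⁆ v = - ω ⁅u, w⁆ v := by rw [← lie_skew w u, map_neg, LinearMap.neg_apply]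
        have e2 : ω ⁅v, u⁆ w = - ω ⁅u, v⁆ w := by rw [← lie_skew v u, map_neg, LinearMap.neg_apply]
        have expand : ω (s v u - ⁅v, u⁆) w = ω (s v u) w - ω ⁅v, u⁆ w := by
          simp
        rw [expand]
        linear_combination h1 + (1/3) * h2 + (1/3) * h3 - (1/3) * e1 - (2/3) * e2
      exact sub_eq_zero.mp (hnd _ key)
    refine ⟨fun w => by rw [hu v]; simp, fun w => ?_⟩
    rw [hsvu, hflat v u w, hu w]
    simp [hu]
  · intro u v hv w
    have hsym : ∀ x y : L, ω ⁅v, x⁆ y = ω ⁅v, y⁆ x := by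
      intro x y
      have h2 := hclosed v x y
      have hb : ω ⁅x, y⁆ v = 0 := by rw [hskew]; simp [hv]
      have e : ω ⁅y, v⁆ x = - ω ⁅v, y⁆ x := by rw [← lie_skew y v, map_neg, LinearMap.neg_apply]
      linear_combination h2 - hb - e
    have svx : ∀ x : L, s v x = (2/3 : K) • ⁅v, x⁆ := by
      intro x
      have key : ∀ y, ω (s v x - (2/3 : K) • ⁅v, x⁆) y = 0 := by
        intro y
        have h1 := hs v x y
        have h2 := hsym x y
        have expand : ω (s v x - (2/3 : K) • ⁅v, x⁆) y
            = ω (s v x) y - (2/3 : K) * ω ⁅v, x⁆ y := by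
          simp
        rw [expand]
        linear_combination h1 - (1/3) * h2
      exact sub_eq_zero.mp (hnd _ key)
    apply hnd
    intro x
    have hmain := hs ⁅u, v⁆ w x
    have hflat' : ω (s ⁅u, v⁆ w) x
        = ω (s u (s v w)) x - ω (s v (s u w)) x := by
      rw [hflat u v w]; simp
    have e1 : ω (s u (s v w)) x = (2/3 : K) * ω (s u ⁅v, w⁆) x := by
      rw [svx w, (s u).map_smul]; simp [smul_eq_mul]
    have e2 : ω (s u ⁅v, w⁆) x
        = (1/3 : K) * (ω ⁅u, ⁅v, w⁆⁆ x + ω ⁅u, x⁆ ⁅v, w⁆) := hs u ⁅v, w⁆ x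
    have e3 : ω (s v (s u w)) x = (2/3 : K) * ω ⁅v, s u w⁆ x := by
      rw [svx (s u w)]; simp [smul_eq_mul]
    have e4 : ω ⁅v, s u w⁆ x = - ω (s u w) ⁅v, x⁆ := by
      rw [hsym (s u w) x, hskew]
    have e5 : ω (s u w) ⁅v, x⁆
        = (1/3 : K) * (ω ⁅u, w⁆ ⁅v, x⁆ + ω ⁅u, ⁅v, x⁆⁆ w) := hs u w ⁅v, x⁆
    have e6 : ω ⁅u, x⁆ ⁅v, w⁆ = - ω ⁅v, ⁅u, x⁆⁆ w := by
      rw [hskew, hsym w ⁅u, x⁆]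
    have e7 : ω ⁅u, w⁆ ⁅v, x⁆ = - ω ⁅v, ⁅u, w⁆⁆ x := by
      rw [hskew, hsym x ⁅u, w⁆]
    have jw : ω ⁅⁅u, v⁆, w⁆ x = ω ⁅u, ⁅v, w⁆⁆ x - ω ⁅v, ⁅u, w⁆⁆ x := by
      rw [lie_lie]; simp
    have jx : ω ⁅⁅u, v⁆, x⁆ w = ω ⁅u, ⁅v, x⁆⁆ w - ω ⁅v, ⁅u, x⁆⁆ w := by
      rw [lie_lie]; simp
    -- (1/3)*A = (2/9)*A ⇒ A = 0 ⇒ goal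
    have hA : ω ⁅⁅u, v⁆, w⁆ x + ω ⁅⁅u, v⁆, x⁆ w = 0 := by
      have h9 : (1/9 : K) * (ω ⁅⁅u, v⁆, w⁆ x + ω ⁅⁅u, v⁆, x⁆ w) = 0 := by
        linear_combination hflat' - hmain + e1 + (2/3) * e2 - e3 - (2/3) * e4
          + (2/3) * e5 + (2/9) * e6 + (2/9) * e7 - (2/9) * jw - (2/9) * jx
      exact (mul_eq_zero.mp h9).resolve_left (by norm_num)
    linear_combination hmain + (1/3) * hA
end

section
/- Let (𝔤, ⋆) be a finite-dimensional left-symmetric algebra over a field of characteristic zero such that tr(R⋆_b) = 0 for every b ∈ 𝔤, where R⋆_b(v) = v⋆b. Then for every a ∈ 𝔤 the right multiplication operator R⋆_a is nilpotent. -/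
open Polynomial Module LinearMap

/-- Polynomial trick: if all weighted power sums (exponents ≥ 1) of the distinct nonzero
elements of `t` with nonzero weights vanish, then `t` is empty. -/
lemma stmt17_aux_sum_empty {L : Type*} [Field L] (t : Finset L) (d : L → L)
    (hd : ∀ μ ∈ t, d μ ≠ 0) (hμ0 : ∀ μ ∈ t, μ ≠ 0)
    (h : ∀ n : ℕ, ∑ μ ∈ t, d μ * μ ^ (n + 1) = 0) : t = ∅ := by
  classical
  by_contra hne
  obtain ⟨ν, hν⟩ := Finset.nonempty_iff_ne_empty.mpr hne
  set Q : L[X] := ∏ μ ∈ t.erase ν, (X - C μ) with hQ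
  have key : ∑ μ ∈ t, d μ * μ * Q.eval μ = 0 := by
    have heval : ∀ μ : L, Q.eval μ = ∑ k ∈ Finset.range (Q.natDegree + 1), Q.coeff k * μ ^ k := by
      intro μ
      rw [eval_eq_sum_range]
    calc ∑ μ ∈ t, d μ * μ * Q.eval μ
        = ∑ μ ∈ t, ∑ k ∈ Finset.range (Q.natDegree + 1), Q.coeff k * (d μ * μ ^ (k + 1)) := by
          refine Finset.sum_congr rfl fun μ _ ↦ ?_
          rw [heval, Finset.mul_sum]
          exact Finset.sum_congr rfl fun k _ ↦ by ring
      _ = ∑ k ∈ Finset.range (Q.natDegree + 1), Q.coeff k * ∑ μ ∈ t, d μ * μ ^ (k + 1) := by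
          rw [Finset.sum_comm]
          exact Finset.sum_congr rfl fun k _ ↦ by rw [Finset.mul_sum]
      _ = 0 := by
          refine Finset.sum_eq_zero fun k _ ↦ ?_
          rw [h k, mul_zero]
  have hzero : ∀ μ ∈ t, μ ≠ ν → d μ * μ * Q.eval μ = 0 := by
    intro μ hμ hne'
    have : Q.eval μ = 0 := by
      rw [hQ, eval_prod]
      exact Finset.prod_eq_zero (Finset.mem_erase.mpr ⟨hne', hμ⟩) (by simp)
    rw [this, mul_zero]
  have hsingle : ∑ μ ∈ t, d μ * μ * Q.eval μ = d ν * ν * Q.eval ν := by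
    exact Finset.sum_eq_single_of_mem ν hν fun μ hμ hne' ↦ hzero μ hμ hne'
  rw [hsingle] at key
  have hQν : Q.eval ν ≠ 0 := by
    rw [hQ, eval_prod]
    refine Finset.prod_ne_zero_iff.mpr fun μ hμ ↦ ?_
    simp only [eval_sub, eval_X, eval_C]
    exact sub_ne_zero.mpr (Ne.symm (Finset.mem_erase.mp hμ).1)
  exact (mul_ne_zero (mul_ne_zero (hd ν hν) (hμ0 ν hν)) hQν) key

/-- If `g - μ•1` is nilpotent then `trace (g ^ n) = μ ^ n * finrank`. -/
lemma stmt17_trace_pow_of_nilpotent_sub {L W : Type*} [Field L] [AddCommGroup W] [Module L W]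
    [FiniteDimensional L W] (g : Module.End L W) (μ : L)
    (hn : IsNilpotent (g - algebraMap L (Module.End L W) μ)) (n : ℕ) :
    LinearMap.trace L W (g ^ n) = μ ^ n * (finrank L W : L) := by
  set c : Module.End L W := algebraMap L (Module.End L W) μ with hc
  have hcomm : Commute c g := Algebra.commutes μ g
  have hnil : IsNilpotent (g ^ n - c ^ n) := by
    rw [← (hcomm.symm).geom_sum₂_mul n]
    refine Commute.isNilpotent_mul_left ?_ hn
    refine Commute.sum_left _ _ _ fun i _ ↦ ?_
    have h1 : Commute (g ^ i) (g - c) :=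
      ((Commute.refl g).pow_left i).sub_right ((hcomm.symm).pow_left i)
    have h2 : Commute (c ^ (n - 1 - i)) (g - c) :=
      (hcomm.pow_left _).sub_right ((Commute.refl c).pow_left _)
    exact h1.mul_left h2
  have htrnil : LinearMap.trace L W (g ^ n - c ^ n) = 0 :=
    (LinearMap.isNilpotent_trace_of_isNilpotent hnil).eq_zero
  have heq : LinearMap.trace L W (g ^ n) = LinearMap.trace L W (c ^ n) :=
    sub_eq_zero.mp (by rw [← map_sub]; exact htrnil)
  rw [heq, ← map_pow]
  have hcpow : (algebraMap L (Module.End L W) (μ ^ n)) = (μ ^ n) • (1 : Module.End L W) := by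
    simp [Algebra.algebraMap_eq_smul_one]
  rw [hcpow, map_smul, LinearMap.trace_one, smul_eq_mul]

/-- Over an algebraically closed field of characteristic zero, an endomorphism all of whose
positive powers have trace zero is nilpotent. -/
lemma stmt17_nilpotent_of_trace_pow_algClosed {L V : Type*} [Field L] [IsAlgClosed L] [CharZero L]
    [AddCommGroup V] [Module L V] [FiniteDimensional L V]
    (f : Module.End L V) (h : ∀ n : ℕ, LinearMap.trace L V (f ^ (n + 1)) = 0) :
    IsNilpotent f := by
  classical
  have hsup : ⨆ μ, f.maxGenEigenspace μ = ⊤ := Module.End.iSup_maxGenEigenspace_eq_top f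
  have hds := DirectSum.isInternal_submodule_of_iSupIndep_of_iSup_eq_top
    f.independent_maxGenEigenspace hsup
  have h_fin : {μ | f.maxGenEigenspace μ ≠ ⊥}.Finite :=
    WellFoundedGT.finite_ne_bot_of_iSupIndep f.independent_maxGenEigenspace
  -- trace of powers is a weighted power sum of eigenvalues
  have key : ∀ n : ℕ, ∑ μ ∈ h_fin.toFinset,
      (finrank L (f.maxGenEigenspace μ) : L) * μ ^ (n + 1) = 0 := by
    intro n
    have hmap : ∀ μ, Set.MapsTo (f ^ (n + 1))
        (f.maxGenEigenspace μ) (f.maxGenEigenspace μ) :=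
      fun μ ↦ f.mapsTo_maxGenEigenspace_of_comm ((Commute.refl f).pow_right _) μ
    have hsum := LinearMap.trace_eq_sum_trace_restrict' hds h_fin hmap
    rw [h n] at hsum
    refine Eq.trans (Finset.sum_congr rfl fun μ hμ ↦ ?_) hsum.symm
    -- trace of the restriction of `f ^ (n+1)` equals `μ ^ (n+1) * finrank`
    have hmt : ∀ x ∈ f.maxGenEigenspace μ, f x ∈ f.maxGenEigenspace μ :=
      f.mapsTo_maxGenEigenspace_of_comm rfl μ
    have hres : (f ^ (n + 1)).restrict (hmap μ) = (f.restrict hmt) ^ (n + 1) := by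
      rw [Module.End.pow_restrict]
    have hnil : IsNilpotent
        (f.restrict hmt - algebraMap L (Module.End L (f.maxGenEigenspace μ)) μ) := by
      have h' := f.isNilpotent_restrict_maxGenEigenspace_sub_algebraMap μ
      convert h' using 1
      ext x
      simp
      rfl
    rw [hres, stmt17_trace_pow_of_nilpotent_sub _ μ hnil]
    ring
  -- nonzero eigenvalues form an empty set
  have hzero : ∀ μ, μ ≠ 0 → f.maxGenEigenspace μ = ⊥ := by
    intro μ hμ
    by_contra hb
    have hmem : μ ∈ h_fin.toFinset.filter (· ≠ 0) := by
      simp [Set.Finite.mem_toFinset, hb, hμ]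
    have := stmt17_aux_sum_empty (h_fin.toFinset.filter (· ≠ 0))
      (fun μ ↦ (finrank L (f.maxGenEigenspace μ) : L))
      (by
        intro ν hν
        simp only [Finset.mem_filter, Set.Finite.mem_toFinset, Set.mem_setOf_eq] at hν
        have : finrank L (f.maxGenEigenspace ν) ≠ 0 := by
          simpa [Submodule.finrank_eq_zero] using hν.1
        exact_mod_cast Nat.cast_ne_zero.mpr this)
      (fun ν hν ↦ (Finset.mem_filter.mp hν).2)
      (by
        intro n
        refine Eq.trans (Finset.sum_subset (Finset.filter_subset _ _)
          fun ν hν hν' ↦ ?_) (key n)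
        have : ν = 0 := by
          by_contra h0
          exact hν' (Finset.mem_filter.mpr ⟨hν, h0⟩)
        simp [this])
    rw [this] at hmem
    exact absurd hmem (Finset.notMem_empty μ)
  -- hence everything is in the generalized 0-eigenspace
  have htop : f.maxGenEigenspace 0 = ⊤ := by
    rw [← hsup]
    refine le_antisymm (le_iSup _ 0) (iSup_le fun μ ↦ ?_)
    rcases eq_or_ne μ 0 with rfl | hμ
    · exact le_rfl
    · rw [hzero μ hμ]; exact bot_le
  rw [LinearMap.isNilpotent_iff_charpoly, LinearMap.charpoly_eq_X_pow_iff]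
  intro m
  have hm : m ∈ f.maxGenEigenspace 0 := htop ▸ Submodule.mem_top
  rw [Module.End.mem_maxGenEigenspace] at hm
  obtain ⟨k, hk⟩ := hm
  exact ⟨k, by simpa using hk⟩

/-- Over any field of characteristic zero, an endomorphism all of whose positive powers have
trace zero is nilpotent. -/
lemma stmt17_nilpotent_of_trace_pow {K A : Type*} [Field K] [CharZero K] [AddCommGroup A]
    [Module K A] [FiniteDimensional K A] (f : Module.End K A)
    (h : ∀ n : ℕ, LinearMap.trace K A (f ^ (n + 1)) = 0) : IsNilpotent f := by
  classical
  set b := Module.finBasis K A with hb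
  set M := LinearMap.toMatrixAlgEquiv b f with hM
  set L := AlgebraicClosure K with hL
  set φ := algebraMap K L with hφ
  haveI : CharZero L := charZero_of_injective_algebraMap φ.injective
  set N := M.map φ with hN
  have hMM : ∀ g : Module.End K A, LinearMap.toMatrixAlgEquiv b g = LinearMap.toMatrix b b g :=
    fun _ ↦ rfl
  have hNpow : ∀ n : ℕ, N ^ n = (M ^ n).map φ := by
    intro n
    have := map_pow (φ.mapMatrix) M n
    simpa [RingHom.mapMatrix_apply] using this.symm
  have htrmap : ∀ X : Matrix (Fin (finrank K A)) (Fin (finrank K A)) K, Matrix.trace (X.map φ) = φ (Matrix.trace X) := by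
    intro X
    simp [Matrix.trace, Matrix.map_apply, map_sum, Matrix.diag]
  have htrM : ∀ n : ℕ, Matrix.trace (M ^ (n + 1)) = 0 := by
    intro n
    have h1 : M ^ (n + 1) = LinearMap.toMatrixAlgEquiv b (f ^ (n + 1)) := (map_pow _ _ _).symm
    rw [h1, hMM, ← LinearMap.trace_eq_matrix_trace K b, h n]
  have htrN : ∀ n : ℕ, Matrix.trace (N ^ (n + 1)) = 0 := by
    intro n
    rw [hNpow, htrmap, htrM, map_zero]
  -- now work over the algebraic closure
  set b' := Pi.basisFun L (Fin (finrank K A)) with hb'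
  set g := Matrix.toLinAlgEquiv b' N with hg
  have hgtr : ∀ n : ℕ, LinearMap.trace L _ (g ^ (n + 1)) = 0 := by
    intro n
    rw [LinearMap.trace_eq_matrix_trace L b']
    have : LinearMap.toMatrix b' b' (g ^ (n + 1))
        = LinearMap.toMatrixAlgEquiv b' (g ^ (n + 1)) := rfl
    rw [this]
    have : LinearMap.toMatrixAlgEquiv b' (g ^ (n + 1)) = N ^ (n + 1) := by
      rw [map_pow, hg, LinearMap.toMatrixAlgEquiv_toLinAlgEquiv]
    rw [this, htrN]
  obtain ⟨k, hk⟩ := stmt17_nilpotent_of_trace_pow_algClosed g hgtr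
  have hNk : N ^ k = 0 := by
    have : LinearMap.toMatrixAlgEquiv b' (g ^ k) = N ^ k := by
      rw [map_pow, hg, LinearMap.toMatrixAlgEquiv_toLinAlgEquiv]
    rw [← this, hk, map_zero]
  have hMk : M ^ k = 0 := by
    have h1 : (M ^ k).map φ = 0 := by rw [← hNpow, hNk]
    ext i j
    have := congrFun (congrFun h1 i) j
    simp only [Matrix.map_apply, Matrix.zero_apply] at this ⊢
    exact φ.injective (by simpa using this)
  refine ⟨k, ?_⟩
  have : LinearMap.toMatrixAlgEquiv b (f ^ k) = 0 := by rw [map_pow, ← hM, hMk]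
  have h2 := congrArg (Matrix.toLinAlgEquiv b) this
  rwa [Matrix.toLinAlgEquiv_toMatrixAlgEquiv, map_zero] at h2

/-- In a finite-dimensional left-symmetric algebra over a field of
characteristic zero in which every right multiplication has trace zero, every right
multiplication operator is nilpotent. -/
theorem stmt17 {K A : Type*} [Field K] [CharZero K] [AddCommGroup A] [Module K A]
    [FiniteDimensional K A]
    (s : A →ₗ[K] A →ₗ[K] A)
    (hls : ∀ x y z : A, s (s x y) z - s x (s y z) = s (s y x) z - s y (s x z))
    (htr : ∀ b : A, LinearMap.trace K A (s.flip b) = 0) :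
    ∀ a : A, IsNilpotent (s.flip a : Module.End K A) := by
  intro a
  -- notation: right and left multiplications as endomorphisms
  set R : A → Module.End K A := fun v ↦ s.flip v with hR
  set Lm : A → Module.End K A := fun v ↦ s v with hLm
  -- the fundamental operator identity
  have hop : ∀ u v : A, R (s u v) = R v * R u + (Lm u * R v - R v * Lm u) := by
    intro u v
    ext z
    have := hls z u v
    simp only [hR, hLm, Module.End.mul_apply, LinearMap.add_apply, LinearMap.sub_apply,
      LinearMap.flip_apply] at *
    linear_combination (norm := module) -this
  -- the sequence x₀ = a, xₙ₊₁ = xₙ ⋆ a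
  let x : ℕ → A := fun n ↦ Nat.rec a (fun _ xn ↦ s xn a) n
  have hx0 : x 0 = a := rfl
  have hxs : ∀ n, x (n + 1) = s (x n) a := fun n ↦ rfl
  -- trace recursion
  have hkey : ∀ n m : ℕ, LinearMap.trace K A ((R a) ^ m * R (x n))
      = LinearMap.trace K A ((R a) ^ (m + n + 1)) := by
    intro n
    induction n with
    | zero =>
      intro m
      rw [hx0, ← pow_succ]
    | succ n ih =>
      intro m
      rw [hxs, hop]
      have hexp : (R a) ^ m * ((R a) * R (x n) + (Lm (x n) * (R a) - (R a) * Lm (x n)))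
          = (R a) ^ m * (R a) * R (x n)
            + ((R a) ^ m * (Lm (x n) * (R a)) - (R a) ^ m * (R a) * Lm (x n)) := by
        noncomm_ring
      rw [hexp, map_add, map_sub]
      have hcyc : LinearMap.trace K A ((R a) ^ m * (Lm (x n) * (R a)))
          = LinearMap.trace K A ((R a) ^ m * (R a) * Lm (x n)) := by
        rw [← mul_assoc, LinearMap.trace_mul_comm, ← mul_assoc, ← pow_succ', pow_succ]
      rw [hcyc, sub_self, add_zero, ← pow_succ, ih (m + 1)]
      have hmn : m + 1 + n + 1 = m + (n + 1) + 1 := by omega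
      rw [hmn]
  -- hence all positive powers of R a have trace zero
  have htrpow : ∀ n : ℕ, LinearMap.trace K A ((R a) ^ (n + 1)) = 0 := by
    intro n
    have h1 := hkey n 0
    rw [pow_zero, one_mul, zero_add] at h1
    rw [← h1]
    exact htr (x n)
  exact stmt17_nilpotent_of_trace_pow (R a) htrpow
end

section
/- Every 2-dimensional flat quasi-Frobenius Lie superalgebra over a field of characteristic zero is abelian. In particular, in the periplectic case with basis {a | b} (a even central, b odd, ω(a,b)=1), the closedness of ω forces [b,b] = 0. -/
private lemma stmt18_aux {K M : Type*} [Field K] [CharZero K] [AddCommGroup M] [Module K M]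
    (a : M) (h : a = -a) : a = 0 := by
  have h2 : (2:K) • a = 0 := by rw [two_smul]; nth_rewrite 1 [h]; exact neg_add_cancel a
  simpa [smul_eq_zero] using h2



/-- Every 2-dimensional flat quasi-Frobenius Lie superalgebra over a
field of characteristic zero is abelian.  The superalgebra `𝔤 = V0 ⊕ V1` is encoded
by the parity components of the bracket (`b0, b1, b2`), of the homogeneous
non-degenerate closed anti-symmetric form `ω` (`ω00, ω01, ω10, ω11`), and of the
natural symplectic product `s` (`s00, s01, s10, s11`), defined by
`ω(u⋆v,w) = (1/3)(ω([u,v],w) + (−1)^{|v||w|} ω([u,w],v))`; flatness is the super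
left-symmetry of `s`.  The conclusion is that all brackets vanish; in particular,
in the periplectic case, `[b,b] = 0` for every odd `b`. -/
theorem stmt18 {K V0 V1 : Type*} [Field K] [CharZero K]
    [AddCommGroup V0] [Module K V0] [FiniteDimensional K V0]
    [AddCommGroup V1] [Module K V1] [FiniteDimensional K V1]
    (hdim : Module.finrank K V0 + Module.finrank K V1 = 2)
    -- the super Lie bracket, by parity components
    (b0 : V0 →ₗ[K] V0 →ₗ[K] V0) (b1 : V0 →ₗ[K] V1 →ₗ[K] V1)
    (b2 : V1 →ₗ[K] V1 →ₗ[K] V0)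
    (hb0 : ∀ x y, b0 x y = - b0 y x)
    (hb2 : ∀ u v, b2 u v = b2 v u)
    (j000 : ∀ x y z, b0 x (b0 y z) = b0 (b0 x y) z + b0 y (b0 x z))
    (j001 : ∀ x y u, b1 (b0 x y) u = b1 x (b1 y u) - b1 y (b1 x u))
    (j011 : ∀ x u v, b0 x (b2 u v) = b2 (b1 x u) v + b2 u (b1 x v))
    (j111 : ∀ u v w, b1 (b2 u v) w + b1 (b2 v w) u + b1 (b2 w u) v = 0)
    -- the homogeneous anti-symmetric form, by parity components
    (ω00 : V0 →ₗ[K] V0 →ₗ[K] K) (ω01 : V0 →ₗ[K] V1 →ₗ[K] K)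
    (ω10 : V1 →ₗ[K] V0 →ₗ[K] K) (ω11 : V1 →ₗ[K] V1 →ₗ[K] K)
    (hω00 : ∀ x y, ω00 x y = - ω00 y x)
    (hω11 : ∀ u v, ω11 u v = ω11 v u)
    (hω01 : ∀ x u, ω10 u x = - ω01 x u)
    (hhomog : (ω01 = 0 ∧ ω10 = 0) ∨ (ω00 = 0 ∧ ω11 = 0))
    (hnd : ∀ (x : V0) (u : V1),
      (∀ (y : V0) (v : V1), ω00 x y + ω01 x v + ω10 u y + ω11 u v = 0) →
      x = 0 ∧ u = 0)
    -- closedness of ω, by parity components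
    (c000 : ∀ x y z, ω00 (b0 x y) z + ω00 (b0 y z) x + ω00 (b0 z x) y = 0)
    (c001 : ∀ x y u, ω01 (b0 x y) u + ω10 (b1 y u) x - ω10 (b1 x u) y = 0)
    (c011 : ∀ x u v, ω11 (b1 x u) v + ω00 (b2 u v) x + ω11 (b1 x v) u = 0)
    (c111 : ∀ u v w, ω01 (b2 u v) w + ω01 (b2 v w) u + ω01 (b2 w u) v = 0)
    -- the natural symplectic product, by parity components
    (s00 : V0 →ₗ[K] V0 →ₗ[K] V0) (s01 : V0 →ₗ[K] V1 →ₗ[K] V1)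
    (s10 : V1 →ₗ[K] V0 →ₗ[K] V1) (s11 : V1 →ₗ[K] V1 →ₗ[K] V0)
    (d000 : ∀ x y z, ω00 (s00 x y) z = (1/3 : K) * (ω00 (b0 x y) z + ω00 (b0 x z) y))
    (d001 : ∀ x y u, ω01 (s00 x y) u = (1/3 : K) * (ω01 (b0 x y) u + ω10 (b1 x u) y))
    (d010 : ∀ x u z, ω10 (s01 x u) z = (1/3 : K) * (ω10 (b1 x u) z + ω01 (b0 x z) u))
    (d011 : ∀ x u v, ω11 (s01 x u) v = (1/3 : K) * (ω11 (b1 x u) v - ω11 (b1 x v) u))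
    (d100 : ∀ u y z, ω10 (s10 u y) z = (1/3 : K) * (- ω10 (b1 y u) z - ω10 (b1 z u) y))
    (d101 : ∀ u y v, ω11 (s10 u y) v = (1/3 : K) * (- ω11 (b1 y u) v + ω00 (b2 u v) y))
    (d110 : ∀ u v z, ω00 (s11 u v) z = (1/3 : K) * (ω00 (b2 u v) z - ω11 (b1 z u) v))
    (d111 : ∀ u v w, ω01 (s11 u v) w = (1/3 : K) * (ω01 (b2 u v) w - ω01 (b2 u w) v))
    -- flatness: the natural symplectic product is (super) left-symmetric
    (f1 : ∀ x y z, s00 (s00 x y) z - s00 x (s00 y z) = s00 (s00 y x) z - s00 y (s00 x z))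
    (f2 : ∀ x y u, s01 (s00 x y) u - s01 x (s01 y u) = s01 (s00 y x) u - s01 y (s01 x u))
    (f3 : ∀ x u z, s10 (s01 x u) z - s01 x (s10 u z) = s10 (s10 u x) z - s10 u (s00 x z))
    (f4 : ∀ x u v, s11 (s01 x u) v - s00 x (s11 u v) = s11 (s10 u x) v - s11 u (s01 x v))
    (f5 : ∀ u v z, s00 (s11 u v) z - s11 u (s10 v z) = -(s00 (s11 v u) z - s11 v (s10 u z)))
    (f6 : ∀ u v w, s01 (s11 u v) w - s10 u (s11 v w) = -(s01 (s11 v u) w - s10 v (s11 u w))) :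
    b0 = 0 ∧ b1 = 0 ∧ b2 = 0 ∧ ∀ u : V1, b2 u u = 0 := by
  classical
  rcases (show (Module.finrank K V0 = 0 ∧ Module.finrank K V1 = 2) ∨
      (Module.finrank K V0 = 1 ∧ Module.finrank K V1 = 1) ∨
      (Module.finrank K V0 = 2 ∧ Module.finrank K V1 = 0) by omega) with
    ⟨h0, h1⟩ | ⟨h0, h1⟩ | ⟨h0, h1⟩
  · -- V0 = 0
    haveI : Subsingleton V0 := Module.finrank_zero_iff.mp h0
    have hb0' : b0 = 0 := by ext x y; exact Subsingleton.elim _ _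
    have hb1' : b1 = 0 := by
      ext x u; rw [Subsingleton.elim x (0 : V0)]; simp
    have hb2' : b2 = 0 := by ext u v; exact Subsingleton.elim _ _
    exact ⟨hb0', hb1', hb2', fun u => by rw [hb2']; simp⟩
  · -- (1,1): the periplectic case
    obtain ⟨B0⟩ : Nonempty (Module.Basis (Fin 1) K V0) := ⟨Module.finBasisOfFinrankEq K V0 h0⟩
    obtain ⟨B1⟩ : Nonempty (Module.Basis (Fin 1) K V1) := ⟨Module.finBasisOfFinrankEq K V1 h1⟩
    set e := B0 0 with he
    set f := B1 0 with hfdef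
    have hrep0 : ∀ x : V0, x = B0.repr x 0 • e := fun x => by
      have := B0.sum_repr x; rw [Fin.sum_univ_one] at this; exact this.symm
    have hrep1 : ∀ u : V1, u = B1.repr u 0 • f := fun u => by
      have := B1.sum_repr u; rw [Fin.sum_univ_one] at this; exact this.symm
    have hωee : ω00 e e = 0 := stmt18_aux (K := K) _ (hω00 e e)
    rcases hhomog with ⟨h01, h10⟩ | ⟨h00, h11⟩
    · -- even ω is impossible in dimension (1,1)
      exfalso
      apply B0.ne_zero 0
      refine (hnd e 0 ?_).1
      intro y v
      rw [hrep0 y]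
      simp [h01, h10, map_smul, hωee]
    · -- odd ω
      have nd0 : ∀ x : V0, (∀ v, ω01 x v = 0) → x = 0 := by
        intro x hx
        refine (hnd x 0 ?_).1
        intro y v; simp [h00, hx]
      have nd1 : ∀ u : V1, (∀ y, ω10 u y = 0) → u = 0 := by
        intro u hu
        refine (hnd 0 u ?_).2
        intro y v; simp [h00, h11, hu]
      have hc : ω01 e f ≠ 0 := by
        intro hc
        apply B0.ne_zero 0
        apply nd0
        intro v
        rw [hrep1 v]
        simp [map_smul, hc, ← he]
      set c := ω01 e f with hcdef
      have hfe : ω10 f e = -c := hω01 e f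
      have hb0e : b0 e e = 0 := stmt18_aux (K := K) _ (hb0 e e)
      have hb0' : ∀ x y, b0 x y = 0 := by
        intro x y
        rw [hrep0 x, hrep0 y]
        simp [map_smul, hb0e]
      -- b2 = 0 from closedness
      have hb2ff : b2 f f = 0 := by
        apply nd0
        intro v
        have h3 : (3:K) * ω01 (b2 f f) f = 0 := by linear_combination c111 f f f
        have h4 : ω01 (b2 f f) f = 0 := by
          rcases mul_eq_zero.mp h3 with h | h
          · exact absurd h three_ne_zero
          · exact h
        rw [hrep1 v]
        simp [map_smul, h4]
      have hb2' : ∀ u v, b2 u v = 0 := by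
        intro u v; rw [hrep1 u, hrep1 v]; simp [map_smul, hb2ff]
      -- now kill b1 using flatness
      set μ := B1.repr (b1 e f) 0 with hμ
      have hb1ef : b1 e f = μ • f := hrep1 (b1 e f)
      have nd1' : ∀ u : V1, ω10 u e = 0 → u = 0 := by
        intro u h
        apply nd1
        intro y
        rw [hrep0 y]
        simp [map_smul, h]
      have nd0' : ∀ x : V0, ω01 x f = 0 → x = 0 := by
        intro x h; apply nd0; intro v; rw [hrep1 v]; simp [map_smul, h]
      have val1 : ∀ (w : V1) (α : K), ω10 w e = α * (-c) → w = α • f := by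
        intro w α h
        have h5 : w - α • f = 0 := by
          apply nd1'
          rw [map_sub, LinearMap.sub_apply, map_smul, LinearMap.smul_apply, hfe, h,
            smul_eq_mul]
          ring
        rw [sub_eq_zero] at h5; exact h5
      have val0 : ∀ (w : V0) (α : K), ω01 w f = α * c → w = α • e := by
        intro w α h
        have h5 : w - α • e = 0 := by
          apply nd0'
          rw [map_sub, LinearMap.sub_apply, map_smul, LinearMap.smul_apply, hcdef] at *
          rw [h, smul_eq_mul]; ring
        rw [sub_eq_zero] at h5; exact h5
      have hs01 : s01 e f = (μ/3) • f := by
        apply val1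
        rw [d010 e f e, hb0e, hb1ef, map_smul, LinearMap.smul_apply, hfe]
        simp only [map_zero, LinearMap.zero_apply, smul_eq_mul]
        ring
      have hs10 : s10 f e = (-(2*μ/3)) • f := by
        apply val1
        rw [d100 f e e, hb1ef, map_smul, LinearMap.smul_apply, hfe]
        simp only [smul_eq_mul]
        ring
      have hs00 : s00 e e = (-(μ/3)) • e := by
        apply val0
        rw [d001 e e f, hb0e, hb1ef, map_smul, LinearMap.smul_apply, hfe]
        simp only [map_zero, LinearMap.zero_apply, smul_eq_mul]
        ring
      have hsc := congrArg (fun w => ω10 w e) (f3 e f e)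
      simp only [hs01, hs10, hs00, map_sub, map_smul, LinearMap.sub_apply,
        LinearMap.smul_apply, hfe, smul_eq_mul] at hsc
      have hμ0 : μ = 0 := by
        have hq : μ ^ 2 * c = 0 := by linear_combination ((9:K)/2) * hsc
        rcases mul_eq_zero.mp hq with h | h
        · exact pow_eq_zero_iff (two_ne_zero) |>.mp h
        · exact absurd h hc
      have hb1' : ∀ x u, b1 x u = 0 := by
        intro x u
        rw [hrep0 x, hrep1 u]
        simp [map_smul, hb1ef, hμ0]
      refine ⟨?_, ?_, ?_, fun u => hb2' u u⟩
      · ext x y; simp [hb0' x y]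
      · ext x u; simp [hb1' x u]
      · ext u v; simp [hb2' u v]
  · -- V1 = 0
    haveI : Subsingleton V1 := Module.finrank_zero_iff.mp h1
    have hb1' : b1 = 0 := by ext x u; exact Subsingleton.elim _ _
    have hb2' : b2 = 0 := by
      ext u v; rw [Subsingleton.elim u (0 : V1)]; simp
    have nd0 : ∀ x : V0, (∀ y, ω00 x y = 0) → x = 0 := by
      intro x hx
      refine (hnd x 0 ?_).1
      intro y v
      rw [Subsingleton.elim v (0 : V1)]
      simp [hx]
    obtain ⟨B⟩ : Nonempty (Module.Basis (Fin 2) K V0) := ⟨Module.finBasisOfFinrankEq K V0 h0⟩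
    set e := B 0 with he
    set f := B 1 with hfdef
    have hrep : ∀ x : V0, x = B.repr x 0 • e + B.repr x 1 • f := fun x => by
      have := B.sum_repr x; rw [Fin.sum_univ_two] at this; exact this.symm
    have hωee : ω00 e e = 0 := stmt18_aux (K := K) _ (hω00 e e)
    have hωff : ω00 f f = 0 := stmt18_aux (K := K) _ (hω00 f f)
    have hc : ω00 e f ≠ 0 := by
      intro hc
      apply B.ne_zero 0
      apply nd0
      intro y
      rw [hrep y]
      simp [map_smul, hωee, hc, ← he]
    set c := ω00 e f with hcdef
    have hb0ee : b0 e e = 0 := stmt18_aux (K := K) _ (hb0 e e)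
    have hb0ff : b0 f f = 0 := stmt18_aux (K := K) _ (hb0 f f)
    set t : V0 := c⁻¹ • b0 e f with ht
    have hbv : ∀ x y : V0, b0 x y = (B.repr x 0 * B.repr y 1 - B.repr x 1 * B.repr y 0) • b0 e f := by
      intro x y
      conv_lhs => rw [hrep x, hrep y]
      simp only [map_add, map_smul, LinearMap.add_apply, LinearMap.smul_apply,
        hb0ee, hb0ff, hb0 f e, smul_zero, add_zero, zero_add, smul_neg]
      module
    have hωv : ∀ x y : V0, ω00 x y = (B.repr x 0 * B.repr y 1 - B.repr x 1 * B.repr y 0) * c := by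
      intro x y
      conv_lhs => rw [hrep x, hrep y]
      simp only [map_add, map_smul, LinearMap.add_apply, LinearMap.smul_apply,
        hωee, hωff, hω00 f e, smul_eq_mul, smul_zero, mul_zero, add_zero, zero_add,
        mul_neg, smul_neg]
      ring
    have key : ∀ x y : V0, b0 x y = ω00 x y • t := by
      intro x y
      rw [hbv, hωv, ht, smul_smul, mul_assoc, mul_inv_cancel₀ hc, mul_one]
    have htt : ω00 t t = 0 := stmt18_aux (K := K) _ (hω00 t t)
    have kB : ∀ x y z : V0, ω00 (b0 x y) z = ω00 x y * ω00 t z := by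
      intro x y z
      rw [key, map_smul, LinearMap.smul_apply, smul_eq_mul]
    have sω : ∀ x y z : V0, ω00 (s00 x y) z =
        (1/3 : K) * (ω00 x y * ω00 t z + ω00 x z * ω00 t y) := by
      intro x y z
      rw [d000, kB, kB]
    have sω2 : ∀ x y z : V0, ω00 z (s00 x y) =
        -((1/3 : K) * (ω00 x y * ω00 t z + ω00 x z * ω00 t y)) := by
      intro x y z
      rw [hω00 z (s00 x y), sω]
    have H : ∀ x y z w : V0, ω00 x y * (ω00 t z * ω00 t w) = 0 := by
      intro x y z w
      have e1 := congrArg (fun p => ω00 p w) (f1 x y z)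
      simp only [map_sub, LinearMap.sub_apply] at e1
      simp only [sω, sω2, htt] at e1
      simp only [hω00 y x, hω00 y t, hω00 x t] at e1
      linear_combination ((9:K)/2) * e1
    have htz : ∀ z, ω00 t z = 0 := by
      intro z
      have h := H e f z z
      rcases mul_eq_zero.mp h with h | h
      · exact absurd h hc
      · rcases mul_eq_zero.mp h with h | h <;> exact h
    have ht0 : t = 0 := nd0 t htz
    have hb0' : b0 = 0 := by
      ext x y
      simp [key x y, ht0]
    exact ⟨hb0', hb1', hb2', fun u => by rw [hb2']; simp⟩
end

section
/- Let 𝔤 be the 4-dimensional Lie algebra K ⊕ 𝔥₃ with basis {x₁, x₂, x₃, x₄}, nonzero bracket [x₁,x₂] = x₃, and symplectic form ω = x₁*∧x₄* + x₂*∧x₃*. Then (𝔤, [·,·], ω) is a flat quasi-Frobenius Lie algebra: ω is non-degenerate and closed, and the natural symplectic product ⋆ defined by ω(u⋆v,w) = (1/3)(ω([u,v],w) + ω([u,w],v)) is left-symmetric. -/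
/-- The bracket of `K ⊕ 𝔥₃` in the basis `x₁,…,x₄` (indices `0,…,3`):
`[x₁,x₂] = x₃`. -/
def br19 {K : Type*} [Field K] (u v : Fin 4 → K) : Fin 4 → K :=
  fun i => if i = 2 then u 0 * v 1 - u 1 * v 0 else 0

/-- The symplectic form `ω = x₁*∧x₄* + x₂*∧x₃*`. -/
def om19 {K : Type*} [Field K] (u v : Fin 4 → K) : K :=
  u 0 * v 3 - u 3 * v 0 + u 1 * v 2 - u 2 * v 1

/-- `(K ⊕ 𝔥₃, [·,·], ω)` with `[x₁,x₂] = x₃` and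
`ω = x₁*∧x₄* + x₂*∧x₃*` is a flat quasi-Frobenius Lie algebra: the bracket is a Lie
bracket, `ω` is skew, non-degenerate and closed, and the natural symplectic product
`⋆` (defined by `ω(u⋆v,w) = (1/3)(ω([u,v],w) + ω([u,w],v))`) is left-symmetric. -/
theorem stmt19 {K : Type*} [Field K] [CharZero K] :
    (∀ u v : Fin 4 → K, br19 u v = - br19 v u) ∧
    (∀ u v w : Fin 4 → K,
      br19 (br19 u v) w + br19 (br19 v w) u + br19 (br19 w u) v = 0) ∧
    (∀ u v : Fin 4 → K, om19 u v = - om19 v u) ∧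
    (∀ u : Fin 4 → K, (∀ v, om19 u v = 0) → u = 0) ∧
    (∀ u v w : Fin 4 → K,
      om19 (br19 u v) w + om19 (br19 v w) u + om19 (br19 w u) v = 0) ∧
    (∀ s : (Fin 4 → K) → (Fin 4 → K) → (Fin 4 → K),
      (∀ u v w, om19 (s u v) w = (1/3 : K) * (om19 (br19 u v) w + om19 (br19 u w) v)) →
      ∀ u v w, s (s u v) w - s u (s v w) = s (s v u) w - s v (s u w)) := by
  refine ⟨?_, ?_, ?_, ?_, ?_, ?_⟩
  · intro u v; funext i
    by_cases h : i = 2 <;> simp [br19, h] <;> ring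
  · intro u v w; funext i
    by_cases h : i = 2 <;> simp [br19, h]
  · intro u v; simp [om19]; ring
  · intro u h
    have h0 := h ![0,0,0,1]
    have h1 := h ![0,0,1,0]
    have h2 := h ![0,1,0,0]
    have h3 := h ![1,0,0,0]
    simp [om19] at h0 h1 h2 h3
    funext i; fin_cases i <;> simp_all
  · intro u v w; simp [om19, br19]; ring
  · intro s hs
    have key : ∀ u v : Fin 4 → K, s u v = fun i =>
        if i = 2 then (2*u 0*v 1 - u 1*v 0)/3 else if i = 3 then -(u 1*v 1)/3 else 0 := by
      intro u v; funext i
      have h0 := hs u v ![1,0,0,0]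
      have h1 := hs u v ![0,1,0,0]
      have h2 := hs u v ![0,0,1,0]
      have h3 := hs u v ![0,0,0,1]
      simp [om19, br19] at h0 h1 h2 h3
      fin_cases i
      · simpa using h3
      · simpa using h2
      · show s u v 2 = _; simp; linear_combination -h1
      · show s u v 3 = _; simp; linear_combination -h0
    intro u v w
    simp only [key]
    funext i; fin_cases i <;> simp
end
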